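/- Let b ∈ (0, 10⁻²), N = ⌊exp(b^{−2})⌋, and G(z) = (b²/2)·Log((b−z)/(bN^{−2}−z)) for z ∈ ℂ_L, where Log is the principal branch of the logarithm. Then: G(0) = b² log N and Re G(z) ≤ b² log N for all z ∈ ℂ_L; Re G(z) > 0 for all z ∈ ℂ_L; Re G'(z) ≥ −b for all z ∈ ℂ_L; |Im G(z)| ≤ πb² for all z ∈ ℂ_L; and there exists an absolute constant A > 0 such that |G(z)| ≤ Ab³/|z| and |G'(z)| ≤ Ab³/|z|² for all z ∈ ℂ_L with |z| ≥ b. -/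

import Mathlib

open Complex Metric

private lemma sq_le_imp_le {a b : ℝ} (ha : 0 ≤ a) (hb : 0 ≤ b) (h : a^2 ≤ b^2) : a ≤ b := by
  calc a = Real.sqrt (a^2) := (Real.sqrt_sq ha).symm
    _ ≤ Real.sqrt (b^2) := Real.sqrt_le_sqrt h
    _ = b := Real.sqrt_sq hb

private lemma sq_lt_imp_lt {a b : ℝ} (ha : 0 ≤ a) (hb : 0 ≤ b) (h : a^2 < b^2) : a < b := by
  calc a = Real.sqrt (a^2) := (Real.sqrt_sq ha).symm
    _ < Real.sqrt (b^2) := Real.sqrt_lt_sqrt (by positivity) h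
    _ = b := Real.sqrt_sq hb

set_option maxHeartbeats 1000000 in
/-- Properties of `G(z) = (b²/2) Log((b-z)/(bN⁻²-z))` on the closed left half-plane,
where `N = ⌊exp(b⁻²)⌋`: the maximum of `Re G` is `G(0) = b² log N`, `Re G > 0`,
`Re G' ≥ -b`, `|Im G| ≤ πb²`, and away from the origin `|G(z)| ≤ Ab³/|z|`,
`|G'(z)| ≤ Ab³/|z|²` for an absolute constant `A > 0`. -/
theorem log_building_block_properties :
    ∃ A : ℝ, 0 < A ∧
      ∀ b : ℝ, 0 < b → b < (1/100 : ℝ) →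
      ∀ N : ℕ, N = ⌊Real.exp (1 / b ^ 2)⌋₊ →
      ∀ G : ℂ → ℂ,
        (G = fun z => ((b ^ 2 / 2 : ℝ) : ℂ) *
          Complex.log (((b : ℂ) - z) / ((b : ℂ) * ((N : ℂ) ^ 2)⁻¹ - z))) →
        G 0 = ((b ^ 2 * Real.log N : ℝ) : ℂ) ∧
        (∀ z : ℂ, z.re ≤ 0 → (G z).re ≤ b ^ 2 * Real.log N) ∧
        (∀ z : ℂ, z.re ≤ 0 → 0 < (G z).re) ∧
        (∀ z : ℂ, z.re ≤ 0 → -b ≤ (deriv G z).re) ∧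
        (∀ z : ℂ, z.re ≤ 0 → |(G z).im| ≤ Real.pi * b ^ 2) ∧
        (∀ z : ℂ, z.re ≤ 0 → b ≤ ‖z‖ →
          ‖G z‖ ≤ A * b ^ 3 / ‖z‖ ∧
          ‖deriv G z‖ ≤ A * b ^ 3 / ‖z‖ ^ 2) := by
  refine ⟨2, two_pos, ?_⟩
  intro b hb hb' N hN G hG
  have hb2 : (0:ℝ) < b ^ 2 := by positivity
  have hexp : (2:ℝ) ≤ Real.exp (1 / b ^ 2) := by
    have h1 : (1:ℝ) ≤ 1 / b ^ 2 := by
      rw [le_div_iff₀ hb2]; nlinarith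
    nlinarith [Real.add_one_le_exp (1 / b ^ 2)]
  have hN2 : 2 ≤ N := by
    rw [hN]
    exact Nat.le_floor (by exact_mod_cast hexp)
  have hNr : (2:ℝ) ≤ (N:ℝ) := by exact_mod_cast hN2
  have hNr0 : (0:ℝ) < (N:ℝ) := by linarith
  set c : ℝ := b / (N:ℝ) ^ 2 with hcdef
  have hc0 : 0 < c := by positivity
  have hcb : c < b := by
    rw [hcdef, div_lt_iff₀ (by positivity)]
    have h4 : (4:ℝ) ≤ (N:ℝ)^2 := by nlinarith
    nlinarith
  have hcC : (b : ℂ) * ((N : ℂ) ^ 2)⁻¹ = ((c:ℝ) : ℂ) := by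
    rw [hcdef]
    push_cast
    rw [div_eq_mul_inv]
  set K : ℝ := b ^ 2 / 2 with hKdef
  have hK0 : 0 < K := by positivity
  set W : ℂ → ℂ := fun z => ((b:ℂ) - z) / ((c:ℂ) - z) with hWdef
  have hGW : ∀ z : ℂ, G z = ((K:ℝ) : ℂ) * Complex.log (W z) := by
    intro z
    rw [hG]
    simp only [hWdef, hcC]
  -- basic per-point facts
  have hbre : ∀ z : ℂ, z.re ≤ 0 → 0 < ((b:ℂ) - z).re := by
    intro z hz; simp only [sub_re, ofReal_re]; linarith
  have hcre : ∀ z : ℂ, z.re ≤ 0 → 0 < ((c:ℂ) - z).re := by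
    intro z hz; simp only [sub_re, ofReal_re]; linarith
  have hbne : ∀ z : ℂ, z.re ≤ 0 → (b:ℂ) - z ≠ 0 := by
    intro z hz h
    have := hbre z hz; rw [h] at this; simp at this
  have hcne : ∀ z : ℂ, z.re ≤ 0 → (c:ℂ) - z ≠ 0 := by
    intro z hz h
    have := hcre z hz; rw [h] at this; simp at this
  have hsqb : ∀ z : ℂ, ‖(b:ℂ) - z‖ ^ 2 = (b - z.re)^2 + z.im^2 := by
    intro z
    rw [Complex.sq_norm, normSq_apply]
    simp only [sub_re, sub_im, ofReal_re, ofReal_im, zero_sub]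
    ring
  have hsqc : ∀ z : ℂ, ‖(c:ℂ) - z‖ ^ 2 = (c - z.re)^2 + z.im^2 := by
    intro z
    rw [Complex.sq_norm, normSq_apply]
    simp only [sub_re, sub_im, ofReal_re, ofReal_im, zero_sub]
    ring
  have hDc : ∀ z : ℂ, z.re ≤ 0 → 0 < (c - z.re)^2 + z.im^2 := by
    intro z hz
    have : 0 < c - z.re := by linarith
    positivity
  have hDb : ∀ z : ℂ, z.re ≤ 0 → 0 < (b - z.re)^2 + z.im^2 := by
    intro z hz
    have : 0 < b - z.re := by linarith
    positivity
  have habspos : ∀ z : ℂ, z.re ≤ 0 → 0 < ‖(c:ℂ) - z‖ :=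
    fun z hz => (norm_pos_iff.mpr (hcne z hz))
  have habsposb : ∀ z : ℂ, z.re ≤ 0 → 0 < ‖(b:ℂ) - z‖ :=
    fun z hz => (norm_pos_iff.mpr (hbne z hz))
  have habsW : ∀ z : ℂ, ‖W z‖ =
      ‖(b:ℂ) - z‖ / ‖(c:ℂ) - z‖ := by
    intro z; rw [hWdef]; exact norm_div _ _
  -- |c - z| < |b - z|
  have hlt : ∀ z : ℂ, z.re ≤ 0 →
      ‖(c:ℂ) - z‖ < ‖(b:ℂ) - z‖ := by
    intro z hz
    have h2 : ‖(c:ℂ) - z‖ ^ 2 < ‖(b:ℂ) - z‖ ^ 2 := by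
      rw [hsqb, hsqc]; nlinarith [hz, hc0, hcb]
    exact sq_lt_imp_lt (norm_nonneg _) (norm_nonneg _) h2
  have hWone : ∀ z : ℂ, z.re ≤ 0 → 1 < ‖W z‖ := by
    intro z hz
    rw [habsW, lt_div_iff₀ (habspos z hz), one_mul]
    exact hlt z hz
  have hWpos : ∀ z : ℂ, z.re ≤ 0 → 0 < ‖W z‖ := by
    intro z hz; linarith [hWone z hz]
  -- |z| ≤ |c - z| and |z| ≤ |b - z|
  have hzlec : ∀ z : ℂ, z.re ≤ 0 → ‖z‖ ≤ ‖(c:ℂ) - z‖ := by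
    intro z hz
    have h2 : ‖z‖ ^ 2 ≤ ‖(c:ℂ) - z‖ ^ 2 := by
      rw [hsqc, Complex.sq_norm, normSq_apply]
      nlinarith [hc0]
    exact sq_le_imp_le (norm_nonneg _) (norm_nonneg _) h2
  have hzleb : ∀ z : ℂ, z.re ≤ 0 → ‖z‖ ≤ ‖(b:ℂ) - z‖ := by
    intro z hz
    have h2 : ‖z‖ ^ 2 ≤ ‖(b:ℂ) - z‖ ^ 2 := by
      rw [hsqb, Complex.sq_norm, normSq_apply]
      nlinarith [hb]
    exact sq_le_imp_le (norm_nonneg _) (norm_nonneg _) h2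
  -- real and imaginary parts of W
  have hWre0 : ∀ z : ℂ, z.re ≤ 0 → 0 < (W z).re := by
    intro z hz
    rw [hWdef]
    simp only [div_re, sub_re, sub_im, ofReal_re, ofReal_im, zero_sub, normSq_apply,
      neg_mul_neg]
    have hns : 0 < (c - z.re) * (c - z.re) + z.im * z.im := by nlinarith [hDc z hz]
    have h1 : 0 < (b - z.re) * (c - z.re) := by nlinarith
    exact add_pos_of_pos_of_nonneg (div_pos h1 hns)
      (div_nonneg (mul_self_nonneg _) hns.le)
  have hWim : ∀ z : ℂ, z.re ≤ 0 →
      (W z).im = z.im * (b - c) / ((c - z.re)^2 + z.im^2) := by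
    intro z hz
    rw [hWdef]
    simp only [div_im, sub_re, sub_im, ofReal_re, ofReal_im, zero_sub, normSq_apply]
    rw [show (c - z.re) * (c - z.re) + -z.im * -z.im = (c - z.re)^2 + z.im^2 by ring]
    rw [div_sub_div_same]
    congr 1
    ring
  have hWslit : ∀ z : ℂ, z.re ≤ 0 → W z ∈ Complex.slitPlane := by
    intro z hz
    exact Complex.mem_slitPlane_iff.mpr (Or.inl (hWre0 z hz))
  -- G real part formula
  have hGre : ∀ z : ℂ, (G z).re = K * Real.log (‖W z‖) := by
    intro z
    rw [hGW, Complex.re_ofReal_mul, Complex.log_re]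
  have hGim : ∀ z : ℂ, (G z).im = K * Complex.arg (W z) := by
    intro z
    rw [hGW, Complex.im_ofReal_mul, Complex.log_im]
  -- derivative
  have hderiv : ∀ z : ℂ, z.re ≤ 0 →
      deriv G z = ((K:ℝ) : ℂ) * (((c:ℂ) - z)⁻¹ - ((b:ℂ) - z)⁻¹) := by
    intro z hz
    have h1 : HasDerivAt (fun w : ℂ => (b:ℂ) - w) (-1) z := by
      simpa using (hasDerivAt_id z).const_sub (b:ℂ)
    have h2 : HasDerivAt (fun w : ℂ => (c:ℂ) - w) (-1) z := by
      simpa using (hasDerivAt_id z).const_sub (c:ℂ)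
    have h3 : HasDerivAt W
        (((-1) * ((c:ℂ) - z) - ((b:ℂ) - z) * (-1)) / ((c:ℂ) - z)^2) z :=
      h1.div h2 (hcne z hz)
    have h4 := (Complex.hasDerivAt_log (hWslit z hz)).comp z h3
    have h5 := h4.const_mul ((K:ℝ) : ℂ)
    have h6 : G = fun w => ((K:ℝ) : ℂ) * Complex.log (W w) := funext hGW
    rw [h6]
    have h7 := h5.deriv
    simp only [Function.comp] at h7
    rw [h7]
    have hwz : W z = ((b:ℂ) - z) / ((c:ℂ) - z) := rfl
    rw [hwz]
    field_simp [hbne z hz, hcne z hz]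
    ring
  refine ⟨?_, ?_, ?_, ?_, ?_, ?_⟩
  · -- G 0 = b² log N
    have h0 : (0:ℂ).re ≤ 0 := le_refl _
    have hW0 : W 0 = (((N:ℝ)^2 : ℝ) : ℂ) := by
      rw [hWdef]
      simp only [sub_zero]
      rw [show ((b:ℝ):ℂ) / ((c:ℝ):ℂ) = ((b / c : ℝ) : ℂ) by push_cast; ring]
      congr 1
      rw [hcdef]
      field_simp
    rw [hGW, hW0, ← Complex.ofReal_log (by positivity)]
    rw [← Complex.ofReal_mul]
    congr 1
    rw [show ((N:ℝ)^2) = (N:ℝ)^(2:ℕ) by norm_num, Real.log_pow]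
    push_cast
    rw [hKdef]
    ring
  · -- Re G ≤ b² log N
    intro z hz
    have hle : ‖W z‖ ≤ (N:ℝ)^2 := by
      have h2 : (c * ‖(b:ℂ) - z‖)^2 ≤ (b * ‖(c:ℂ) - z‖)^2 := by
        rw [mul_pow, mul_pow, hsqb, hsqc]
        nlinarith [mul_nonneg (mul_nonneg (mul_nonneg hb.le hc0.le) (sub_nonneg.2 hcb.le))
            (neg_nonneg.2 hz),
          mul_nonneg (mul_nonneg (add_nonneg hb.le hc0.le) (sub_nonneg.2 hcb.le))
            (add_nonneg (sq_nonneg z.re) (sq_nonneg z.im))]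
      have h3 : c * ‖(b:ℂ) - z‖ ≤ b * ‖(c:ℂ) - z‖ :=
        sq_le_imp_le (by positivity) (by positivity) h2
      have hbc : b / c = (N:ℝ)^2 := by rw [hcdef]; field_simp
      rw [habsW, div_le_iff₀ (habspos z hz), ← hbc, div_mul_eq_mul_div, le_div_iff₀ hc0]
      nlinarith [h3, habsposb z hz]
    rw [hGre]
    have hlog : Real.log (‖W z‖) ≤ Real.log ((N:ℝ)^2) :=
      Real.log_le_log (hWpos z hz) hle
    have hlogN : Real.log ((N:ℝ)^2) = 2 * Real.log (N:ℝ) := by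
      rw [show ((N:ℝ)^2) = (N:ℝ)^(2:ℕ) by norm_num, Real.log_pow]
      push_cast; ring
    calc K * Real.log (‖W z‖) ≤ K * (2 * Real.log (N:ℝ)) := by
          apply mul_le_mul_of_nonneg_left _ hK0.le
          rw [← hlogN]; exact hlog
      _ = b ^ 2 * Real.log (N:ℝ) := by rw [hKdef]; ring
  · -- Re G > 0
    intro z hz
    rw [hGre]
    exact mul_pos hK0 (Real.log_pos (hWone z hz))
  · -- Re G' ≥ -b
    intro z hz
    rw [hderiv z hz]
    rw [Complex.re_ofReal_mul, Complex.sub_re, Complex.inv_re, Complex.inv_re,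
      normSq_apply, normSq_apply]
    simp only [sub_re, sub_im, ofReal_re, ofReal_im, zero_sub]
    rw [show (c - z.re) * (c - z.re) + -z.im * -z.im = (c - z.re)^2 + z.im^2 by ring]
    rw [show (b - z.re) * (b - z.re) + -z.im * -z.im = (b - z.re)^2 + z.im^2 by ring]
    have hp : 0 ≤ (c - z.re) / ((c - z.re)^2 + z.im^2) := by
      have h1 : 0 < c - z.re := by linarith
      positivity
    have hq : (b - z.re) / ((b - z.re)^2 + z.im^2) ≤ 1 / b := by
      rw [div_le_div_iff₀ (hDb z hz) hb]
      nlinarith [mul_nonneg (by linarith : (0:ℝ) ≤ b - z.re) (neg_nonneg.2 hz), sq_nonneg z.im]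
    have h5 : -(1/b) ≤ (c - z.re) / ((c - z.re)^2 + z.im^2)
        - (b - z.re) / ((b - z.re)^2 + z.im^2) := by linarith
    have h6 := mul_le_mul_of_nonneg_left h5 hK0.le
    have h7 : K * (-(1/b)) = -(b/2) := by
      rw [hKdef]; field_simp
    rw [h7] at h6
    linarith
  · -- |Im G| ≤ π b²
    intro z hz
    rw [hGim, abs_mul, _root_.abs_of_pos hK0]
    have := Complex.abs_arg_le_pi (W z)
    calc K * |Complex.arg (W z)| ≤ K * Real.pi := by
          exact mul_le_mul_of_nonneg_left this hK0.le
      _ ≤ Real.pi * b ^ 2 := by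
          rw [hKdef]; nlinarith [Real.pi_pos]
  · -- decay bounds
    intro z hz hbz
    have hr : 0 < ‖z‖ := lt_of_lt_of_le hb hbz
    set r := ‖z‖ with hrdef
    -- |W z| ≤ 1 + b / r
    have htri : ‖(b:ℂ) - z‖ ≤ ‖(c:ℂ) - z‖ + b := by
      have : (b:ℂ) - z = ((c:ℂ) - z) + (((b - c : ℝ)) : ℂ) := by push_cast; ring
      rw [this]
      calc ‖((c:ℂ) - z) + (((b - c : ℝ)) : ℂ)‖
          ≤ ‖(c:ℂ) - z‖ + ‖((b - c : ℝ) : ℂ)‖ :=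
            norm_add_le _ _
        _ ≤ ‖(c:ℂ) - z‖ + b := by
            rw [Complex.norm_real, Real.norm_eq_abs, _root_.abs_of_pos (by linarith)]
            linarith
    have hWle : ‖W z‖ ≤ 1 + b / r := by
      rw [habsW]
      calc ‖(b:ℂ) - z‖ / ‖(c:ℂ) - z‖
          ≤ (‖(c:ℂ) - z‖ + b) / ‖(c:ℂ) - z‖ := by
            gcongr
        _ = 1 + b / ‖(c:ℂ) - z‖ := by
            rw [add_div, div_self (ne_of_gt (habspos z hz))]
        _ ≤ 1 + b / r := by
            gcongr
            exact hzlec z hz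
    -- log bound
    have hlogle : Real.log (‖W z‖) ≤ b / r := by
      calc Real.log (‖W z‖) ≤ Real.log (1 + b / r) :=
            Real.log_le_log (hWpos z hz) hWle
        _ ≤ (1 + b / r) - 1 := Real.log_le_sub_one_of_pos (by positivity)
        _ = b / r := by ring
    have hlogge : 0 ≤ Real.log (‖W z‖) :=
      Real.log_nonneg (hWone z hz).le
    -- arg bound
    have hargle : |Complex.arg (W z)| ≤ Real.pi / 2 * (b / r) := by
      set θ := Complex.arg (W z) with hθ
      have habsθ : |θ| ≤ Real.pi / 2 :=
        Complex.abs_arg_le_pi_div_two_iff.mpr (hWre0 z hz).le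
      have hsin : Real.sin θ = (W z).im / ‖W z‖ := Complex.sin_arg _
      have hsinabs : |Real.sin θ| = Real.sin |θ| := by
        rcases le_or_gt 0 θ with h | h
        · rw [_root_.abs_of_nonneg h, _root_.abs_of_nonneg]
          apply Real.sin_nonneg_of_nonneg_of_le_pi h
          calc θ ≤ Real.pi / 2 := by rw [_root_.abs_of_nonneg h] at habsθ; exact habsθ
            _ ≤ Real.pi := by linarith [Real.pi_pos]
        · have hsneg : Real.sin θ < 0 := by
            apply Real.sin_neg_of_neg_of_neg_pi_lt h
            have h1 := (abs_le.1 habsθ).1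
            linarith [Real.pi_pos]
          rw [_root_.abs_of_neg hsneg, _root_.abs_of_neg h, Real.sin_neg]
      have hms := Real.mul_le_sin (abs_nonneg θ) habsθ
      rw [← hsinabs] at hms
      have hWimle : |(W z).im| ≤ b / r := by
        rw [hWim z hz, abs_div, _root_.abs_of_pos (hDc z hz), abs_mul]
        have h1 : |z.im| * |b - c| ≤ r * b := by
          have := Complex.abs_im_le_norm z
          rw [_root_.abs_of_pos (by linarith : (0:ℝ) < b - c)]
          nlinarith [abs_nonneg z.im]
        have h2 : r^2 ≤ (c - z.re)^2 + z.im^2 := by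
          rw [hrdef, Complex.sq_norm, normSq_apply]
          nlinarith [hc0]
        calc |z.im| * |b - c| / ((c - z.re)^2 + z.im^2)
            ≤ r * b / r^2 := by
              apply div_le_div₀ (by positivity) h1 (by positivity) h2
          _ = b / r := by field_simp
      have hsinle : |Real.sin θ| ≤ b / r := by
        rw [hsin, abs_div, _root_.abs_of_pos (hWpos z hz)]
        calc |(W z).im| / ‖W z‖ ≤ |(W z).im| :=
              div_le_self (abs_nonneg _) (hWone z hz).le
          _ ≤ b / r := hWimle
      -- from 2/π * |θ| ≤ |sin θ| conclude |θ| ≤ π/2 * |sin θ|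
      have hpi := Real.pi_pos
      have h8 := mul_le_mul_of_nonneg_left hms (le_of_lt hpi)
      have h9 : Real.pi * (2 / Real.pi * |θ|) = 2 * |θ| := by
        field_simp
      rw [h9] at h8
      calc |θ| ≤ Real.pi / 2 * |Real.sin θ| := by linarith
        _ ≤ Real.pi / 2 * (b / r) := by
            apply mul_le_mul_of_nonneg_left hsinle (by positivity)
    constructor
    · -- |G z| ≤ 2 b³ / r
      rw [hGW, norm_mul, Complex.norm_real, Real.norm_eq_abs, _root_.abs_of_pos hK0]
      have hle : ‖Complex.log (W z)‖ ≤ b / r + Real.pi / 2 * (b / r) := by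
        calc ‖Complex.log (W z)‖
            ≤ |(Complex.log (W z)).re| + |(Complex.log (W z)).im| :=
              Complex.norm_le_abs_re_add_abs_im _
          _ ≤ b / r + Real.pi / 2 * (b / r) := by
              rw [Complex.log_re, Complex.log_im]
              have : |Real.log (‖W z‖)| ≤ b / r := by
                rw [_root_.abs_of_nonneg hlogge]; exact hlogle
              linarith [hargle]
      have ht : 0 ≤ b / r := by positivity
      calc K * ‖Complex.log (W z)‖
          ≤ K * (b / r + Real.pi / 2 * (b / r)) :=
            mul_le_mul_of_nonneg_left hle hK0.le
        _ ≤ 2 * b ^ 3 / r := by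
            rw [hKdef]
            rw [show 2 * b^3 / r = 2 * b^2 * (b / r) by ring]
            nlinarith [Real.pi_le_four, mul_nonneg (sq_nonneg b) ht,
              mul_nonneg (mul_nonneg (sq_nonneg b) ht) (by linarith [Real.pi_le_four] : (0:ℝ) ≤ 4 - Real.pi)]
    · -- |G' z| ≤ 2 b³ / r²
      have hD2 : deriv G z =
          ((K:ℝ) : ℂ) * (((b:ℝ):ℂ) - ((c:ℝ):ℂ)) / (((c:ℂ) - z) * ((b:ℂ) - z)) := by
        rw [hderiv z hz]
        field_simp [hbne z hz, hcne z hz]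
        try ring
      rw [hD2, norm_div, norm_mul, Complex.norm_real, Real.norm_eq_abs, _root_.abs_of_pos hK0, norm_mul]
      rw [show ((b:ℝ):ℂ) - ((c:ℝ):ℂ) = (((b - c : ℝ)):ℂ) by push_cast; ring]
      rw [Complex.norm_real, Real.norm_eq_abs, _root_.abs_of_pos (by linarith : (0:ℝ) < b - c)]
      calc K * (b - c) / (‖(c:ℂ) - z‖ * ‖(b:ℂ) - z‖)
          ≤ K * b / (r * r) := by
            apply div_le_div₀ (by positivity)
              (by nlinarith [hK0.le, hc0] : K * (b - c) ≤ K * b)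
              (by positivity)
              (mul_le_mul (hzlec z hz) (hzleb z hz) hr.le (norm_nonneg _))
        _ ≤ 2 * b ^ 3 / r ^ 2 := by
            rw [div_le_div_iff₀ (by positivity) (by positivity)]
            rw [hKdef]
            nlinarith [mul_nonneg (pow_nonneg hb.le 3) (sq_nonneg r), hr,
              mul_pos (pow_pos hb 3) (mul_pos hr hr)]
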